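/- Let E ⊆ ℝ^d be a compact domain whose boundary ∂E is lower Ahlfors (d−1)-regular at scale η_{∂E} ≥ 1 with constant κ_{∂E}. Fix widths 0 < W_i ≤ L, i = 1,…,d, set W_max = max_i W_i, and for j ∈ ℤ^d let M_j = diag(|D_{j_1}^{(1)}|, …, |D_{j_d}^{(d)}|), where for each coordinate i the intervals D_{j}^{(i)} = I_j^{(i)} ∪ I_{j+1}^{(i)} arise from the dyadic decomposition of (−W_i/2, W_i/2) given by I_j^{(i)} = x_j^{(i)} + (W_i/(3·2^{|j|+1}))·[−1,1) with x_j^{(i)} = sign(j)·(W_i/2)·(1 − 2^{−|j|}). Then there exists a constant C_{d}, depending only on d, such that for every L ≥ W_max, every s ≥ 1 and every j ∈ ℤ^d: #{k ∈ ℤ^d : dist(k, M_j ∂E_L) < s} ≤ C_d · max{W_max, 1/η_{∂E}}^{d−1} · (|∂E|/κ_{∂E}) · s^d. -/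

import Mathlib

open MeasureTheory Set Filter
open scoped ENNReal NNReal Classical

noncomputable section

/-- The eigenvalue/singular-value sequence of an operator, listed with multiplicity:
`eigSeq S n = inf {‖S - S₀‖ : rank S₀ < n+1}` (so `eigSeq S (k-1)` is the paper's `λ_k`). -/
def eigSeq {H : Type*} [NormedAddCommGroup H] [NormedSpace ℂ H] (S : H →L[ℂ] H) (n : ℕ) : ℝ :=
  sInf {r : ℝ | ∃ S₀ : H →L[ℂ] H,
    Module.rank ℂ (LinearMap.range (S₀ : H →ₗ[ℂ] H)) < ((n + 1 : ℕ) : Cardinal) ∧ r = ‖S - S₀‖}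

/-- `X` is lower Ahlfors `(d-1)`-regular at scale `η` with constant `κ`. -/
def LowerAhlfors (d : ℕ) (X : Set (EuclideanSpace ℝ (Fin d))) (η κ : ℝ) : Prop :=
  ∀ x ∈ X, ∀ r : ℝ, 0 < r → r ≤ η →
    ENNReal.ofReal (κ * r ^ ((d : ℝ) - 1)) ≤ μH[(d : ℝ) - 1] (X ∩ Metric.ball x r)

/-- `X` is maximally Ahlfors regular with constant `κ`: lower Ahlfors `(d-1)`-regular at the
scale `H^{d-1}(X)^{1/(d-1)}`. -/
def MaxAhlfors (d : ℕ) (X : Set (EuclideanSpace ℝ (Fin d))) (κ : ℝ) : Prop :=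
  ∀ x ∈ X, ∀ r : ℝ, 0 < r →
    ENNReal.ofReal r ≤ (μH[(d : ℝ) - 1] X) ^ (1 / ((d : ℝ) - 1)) →
    ENNReal.ofReal (κ * r ^ ((d : ℝ) - 1)) ≤ μH[(d : ℝ) - 1] (X ∩ Metric.ball x r)

/-- Membership in the lattice `L⁻¹ ℤ^d`. -/
def latticePt (d : ℕ) (L : ℝ) (x : EuclideanSpace ℝ (Fin d)) : Prop :=
  ∀ i, ∃ k : ℤ, x i = k / L

/-- The discretization `E_L = L⁻¹ℤ^d ∩ E` of a set `E ⊆ ℝ^d` at resolution `L`. -/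
def discretization (d : ℕ) (L : ℝ) (E : Set (EuclideanSpace ℝ (Fin d))) :
    Set (EuclideanSpace ℝ (Fin d)) :=
  {x | x ∈ E ∧ latticePt d L x}

/-- Center `x_j = sign(j)·(W/2)·(1 - 2^{-|j|})` of the dyadic decomposition of `(-W/2, W/2)`. -/
def xJ (W : ℝ) (j : ℤ) : ℝ := (Int.sign j : ℝ) * (W / 2) * (1 - (2 : ℝ)⁻¹ ^ j.natAbs)

/-- Length of the interval `I_j = x_j + (W/(3·2^{|j|+1}))·[-1,1)`. -/
def lenI (W : ℝ) (j : ℤ) : ℝ := W / (3 * 2 ^ j.natAbs)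

/-- Length of `D_j = I_j ∪ I_{j+1}`. -/
def lenD (W : ℝ) (j : ℤ) : ℝ := lenI W j + lenI W (j + 1)

/-- The discrete boundary `∂E_L` of the discretization `E_L`: points of `E_L` at distance
exactly `1/L` from `E_L^c = L⁻¹ℤ^d ∖ E_L`. -/
def dBdryL (d : ℕ) (L : ℝ) (E : Set (EuclideanSpace ℝ (Fin d))) :
    Set (EuclideanSpace ℝ (Fin d)) :=
  {x | x ∈ discretization d L E ∧
    ∃ y : EuclideanSpace ℝ (Fin d), latticePt d L y ∧ y ∉ E ∧ dist x y = 1 / L}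

/-- Euclidean distance from the integer point `k` to the point `M_j y`, where
`M_j = diag(|D_{j_1}|, …, |D_{j_d}|)`. -/
def Mdist (d : ℕ) (W : Fin d → ℝ) (j k : Fin d → ℤ) (y : EuclideanSpace ℝ (Fin d)) : ℝ :=
  Real.sqrt (∑ i, ((k i : ℝ) - lenD (W i) (j i) * y i) ^ 2)

namespace Stmt9Aux

lemma abs_coord_le_dist {d : ℕ} (x y : EuclideanSpace ℝ (Fin d)) (i : Fin d) :
    |x i - y i| ≤ dist x y := by
  rw [EuclideanSpace.dist_eq, ← Real.sqrt_sq_eq_abs]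
  apply Real.sqrt_le_sqrt
  have := Finset.single_le_sum (f := fun i => dist (x i) (y i) ^ 2)
    (fun i _ => sq_nonneg _) (Finset.mem_univ i)
  simpa [Real.dist_eq] using this

lemma exists_frontier_near {X : Type*} [NormedAddCommGroup X] [NormedSpace ℝ X]
    {E : Set X} (hE : IsClosed E) {x y : X} (hx : x ∈ E) (hy : y ∉ E) :
    ∃ z ∈ frontier E, dist x z ≤ dist x y := by
  by_cases hxf : x ∈ frontier E
  · exact ⟨x, hxf, by simp only [dist_self]; exact dist_nonneg⟩
  have hxi : x ∈ interior E := by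
    by_contra h
    exact hxf ⟨subset_closure hx, h⟩
  have hseg : IsPreconnected (segment ℝ x y) := (convex_segment x y).isPreconnected
  by_contra hcon
  push_neg at hcon
  have hdisj : ∀ z ∈ segment ℝ x y, z ∉ frontier E := by
    intro z hz hzf
    have h1 := dist_add_dist_of_mem_segment hz
    have h2 : dist x y < dist x z := hcon z hzf
    have h3 : (0:ℝ) ≤ dist z y := dist_nonneg
    linarith
  have hsub : segment ℝ x y ⊆ interior E ∪ (closure E)ᶜ := by
    intro z hz
    by_cases h1 : z ∈ closure E
    · left
      by_contra h2
      exact hdisj z hz ⟨h1, h2⟩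
    · right; exact h1
  rcases IsPreconnected.subset_or_subset isOpen_interior isClosed_closure.isOpen_compl
      (disjoint_compl_right.mono_left interior_subset_closure) hsub hseg with h | h
  · exact hy (interior_subset (h (right_mem_segment ℝ x y)))
  · exact h (left_mem_segment ℝ x y) (subset_closure hx)

lemma box_subset {d : ℕ} (c : Fin d → ℝ) (t : ℝ) :
    {k : Fin d → ℤ | ∀ i, |(k i : ℝ) - c i| < t} ⊆
      ↑(Fintype.piFinset (fun i => Finset.Icc ⌈c i - t⌉ ⌊c i + t⌋)) := by
  intro k hk
  simp only [Finset.coe_sort_coe, Finset.mem_coe, Fintype.mem_piFinset, Finset.mem_Icc]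
  intro i
  have h := abs_lt.1 (hk i)
  constructor
  · exact Int.ceil_le.2 (by linarith)
  · exact Int.le_floor.2 (by linarith)

lemma box_finite {d : ℕ} (c : Fin d → ℝ) (t : ℝ) :
    {k : Fin d → ℤ | ∀ i, |(k i : ℝ) - c i| < t}.Finite :=
  Set.Finite.subset (Finset.finite_toSet _) (box_subset c t)

lemma box_ncard {d : ℕ} (c : Fin d → ℝ) {t : ℝ} (ht : 0 ≤ t) :
    ({k : Fin d → ℤ | ∀ i, |(k i : ℝ) - c i| < t}.ncard : ℝ) ≤ (2 * t + 1) ^ d := by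
  have h1 : {k : Fin d → ℤ | ∀ i, |(k i : ℝ) - c i| < t}.ncard ≤
      (Fintype.piFinset (fun i => Finset.Icc ⌈c i - t⌉ ⌊c i + t⌋)).card := by
    rw [← Set.ncard_coe_finset]
    exact Set.ncard_le_ncard (box_subset c t) (Finset.finite_toSet _)
  calc ({k : Fin d → ℤ | ∀ i, |(k i : ℝ) - c i| < t}.ncard : ℝ)
      ≤ ((Fintype.piFinset (fun i => Finset.Icc ⌈c i - t⌉ ⌊c i + t⌋)).card : ℝ) := by
        exact_mod_cast h1
    _ = ∏ i : Fin d, ((Finset.Icc ⌈c i - t⌉ ⌊c i + t⌋).card : ℝ) := by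
        rw [Fintype.card_piFinset]; push_cast; ring
    _ ≤ ∏ i : Fin d, (2 * t + 1) := by
        apply Finset.prod_le_prod (fun i _ => by positivity)
        intro i _
        rw [Int.card_Icc]
        have h2 : ((⌊c i + t⌋ + 1 - ⌈c i - t⌉).toNat : ℝ) = max ((⌊c i + t⌋ : ℝ) + 1 - ⌈c i - t⌉) 0 := by
          have h3 := Int.toNat_eq_max (⌊c i + t⌋ + 1 - ⌈c i - t⌉)
          have h4 := congrArg (fun m : ℤ => (m : ℝ)) h3
          push_cast at h4
          exact h4
        refine (le_of_eq h2).trans (max_le ?_ (by linarith))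
        have := Int.floor_le (c i + t)
        have := Int.le_ceil (c i - t)
        linarith
    _ = (2 * t + 1) ^ d := by simp [Finset.prod_const]

end Stmt9Aux

open Stmt9Aux in
theorem stmt_9 (d : ℕ) :
    ∃ C : ℝ, 0 < C ∧
      ∀ (E : Set (EuclideanSpace ℝ (Fin d))) (η κ L s : ℝ) (W : Fin d → ℝ) (j : Fin d → ℤ),
        IsCompact E → 1 ≤ η → 0 < κ → LowerAhlfors d (frontier E) η κ →
        (∀ i, 0 < W i) → (∀ i, W i ≤ L) → 1 ≤ s →
        {k : Fin d → ℤ | ∃ x ∈ dBdryL d L E, Mdist d W j k x < s}.Finite ∧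
        ENNReal.ofReal (κ * ({k : Fin d → ℤ | ∃ x ∈ dBdryL d L E, Mdist d W j k x < s}.ncard : ℝ)) ≤
          ENNReal.ofReal (C * max (⨆ i, W i) (1 / η) ^ ((d : ℝ) - 1) * s ^ d) *
            μH[(d : ℝ) - 1] (frontier E) := by
  refine ⟨7 ^ d, by positivity, ?_⟩
  intro E η κ L s W j hE hη hκ hAhl hW hWL hs
  set K := {k : Fin d → ℤ | ∃ x ∈ dBdryL d L E, Mdist d W j k x < s} with hKdef
  rcases Nat.eq_zero_or_pos d with hd | hd
  · subst hd
    have hKempty : K = ∅ := by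
      ext k
      simp only [hKdef, Set.mem_setOf_eq, Set.mem_empty_iff_false, iff_false, not_exists]
      rintro x ⟨⟨⟨hxE, -⟩, y, -, hyE, -⟩, -⟩
      have hyx : y = x := by ext i; exact i.elim0
      exact hyE (hyx ▸ hxE)
    rw [hKempty]
    refine ⟨Set.finite_empty, ?_⟩
    simp only [Set.ncard_empty, Nat.cast_zero, mul_zero, ENNReal.ofReal_zero]
    exact zero_le
  -- d ≥ 1
  have i₀ : Fin d := ⟨0, hd⟩
  have hL : 0 < L := (hW i₀).trans_le (hWL i₀)
  have hbdd : BddAbove (Set.range W) := Set.Finite.bddAbove (Set.finite_range W)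
  have hWle : ∀ i, W i ≤ ⨆ i, W i := fun i => le_ciSup hbdd i
  have hWm0 : 0 < ⨆ i, W i := (hW i₀).trans_le (hWle i₀)
  set M := max (⨆ i, W i) (1/η) with hM
  have hM0 : 0 < M := lt_max_of_lt_left hWm0
  set r := M⁻¹ with hrdef
  have hr0 : 0 < r := inv_pos.2 hM0
  have hη0 : 0 < η := lt_of_lt_of_le one_pos hη
  have hrη : r ≤ η := by
    have h1 : M⁻¹ ≤ (1/η)⁻¹ := (inv_le_inv₀ hM0 (by positivity)).2 (le_max_right _ _)
    rwa [one_div, inv_inv] at h1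
  have hWmM : (⨆ i, W i) ≤ M := le_max_left _ _
  have ha0 : ∀ i, 0 ≤ lenD (W i) (j i) := by
    intro i
    have := (hW i).le
    unfold lenD lenI
    positivity
  have haW : ∀ i, lenD (W i) (j i) ≤ W i := by
    intro i
    unfold lenD lenI
    have h3 : ∀ m : ℤ, W i / (3 * 2 ^ m.natAbs) ≤ W i / 3 := by
      intro m
      have h1 : (1:ℝ) ≤ 2 ^ m.natAbs := one_le_pow₀ one_le_two
      apply div_le_div_of_nonneg_left (hW i).le (by norm_num)
      nlinarith
    have := h3 (j i)
    have := h3 (j i + 1)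
    have hWi := (hW i).le
    linarith
  have hEc : IsClosed E := hE.isClosed
  have key : ∀ k : Fin d → ℤ, ∃ z : EuclideanSpace ℝ (Fin d), k ∈ K →
      z ∈ frontier E ∧ ∀ i, |(k i : ℝ) - lenD (W i) (j i) * z i| < s + 1 := by
    intro k
    by_cases hk : k ∈ K
    · obtain ⟨x, ⟨⟨hxE, -⟩, y, -, hyE, hxy⟩, hmd⟩ := hk
      obtain ⟨z, hzF, hzd⟩ := exists_frontier_near hEc hxE hyE
      refine ⟨z, fun _ => ⟨hzF, fun i => ?_⟩⟩
      have h1 : |(k i : ℝ) - lenD (W i) (j i) * x i| < s := by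
        have h1a : |(k i:ℝ) - lenD (W i) (j i) * x i| ≤ Mdist d W j k x := by
          rw [Mdist, ← Real.sqrt_sq_eq_abs]
          exact Real.sqrt_le_sqrt
            (Finset.single_le_sum (f := fun i => ((k i:ℝ) - lenD (W i) (j i) * x i) ^ 2)
              (fun _ _ => sq_nonneg _) (Finset.mem_univ i))
        linarith
      have h2 : |x i - z i| ≤ 1 / L := by
        have := abs_coord_le_dist x z i
        rw [hxy] at hzd
        linarith
      have h3 : lenD (W i) (j i) * |x i - z i| ≤ 1 := by
        calc lenD (W i) (j i) * |x i - z i| ≤ L * (1/L) :=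
              mul_le_mul ((haW i).trans (hWL i)) h2 (abs_nonneg _) hL.le
          _ = 1 := by field_simp
      calc |(k i : ℝ) - lenD (W i) (j i) * z i|
          ≤ |(k i : ℝ) - lenD (W i) (j i) * x i|
            + |lenD (W i) (j i) * x i - lenD (W i) (j i) * z i| := abs_sub_le _ _ _
        _ = |(k i : ℝ) - lenD (W i) (j i) * x i| + lenD (W i) (j i) * |x i - z i| := by
            rw [← mul_sub, abs_mul, abs_of_nonneg (ha0 i)]
        _ < s + 1 := by linarith
    · exact ⟨0, fun h => absurd h hk⟩
  choose z hz using key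
  -- finiteness of K
  obtain ⟨R, hR⟩ := hE.isBounded.exists_norm_le
  have hfin : K.Finite := by
    apply (box_finite (fun _ => (0:ℝ)) (s + 1 + (⨆ i, W i) * max R 0)).subset
    intro k hk
    obtain ⟨hzF, hzb⟩ := hz k hk
    intro i
    have hzE : z k ∈ E := hEc.closure_eq ▸ hzF.1
    have hzi : |z k i| ≤ max R 0 := by
      have h1 := abs_coord_le_dist (z k) 0 i
      have h0 : (0:EuclideanSpace ℝ (Fin d)) i = 0 := rfl
      rw [h0, sub_zero, dist_zero_right] at h1
      exact le_max_of_le_left (h1.trans (hR _ hzE))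
    have h5 : lenD (W i) (j i) * |z k i| ≤ (⨆ i, W i) * max R 0 :=
      mul_le_mul ((haW i).trans (hWle i)) hzi (abs_nonneg _) hWm0.le
    have h6 := hzb i
    have h7 : |(k i : ℝ)| ≤ |(k i : ℝ) - lenD (W i) (j i) * z k i|
        + |lenD (W i) (j i) * z k i| := by
      have := abs_add_le ((k i:ℝ) - lenD (W i) (j i) * z k i) (lenD (W i) (j i) * z k i)
      simpa using this
    have h8 : |lenD (W i) (j i) * z k i| = lenD (W i) (j i) * |z k i| := by
      rw [abs_mul, abs_of_nonneg (ha0 i)]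
    show |(k i : ℝ) - 0| < s + 1 + (⨆ i, W i) * max R 0
    rw [sub_zero]
    linarith [h7, h8 ▸ h7]
  refine ⟨hfin, ?_⟩
  set T := hfin.toFinset with hT
  have hTK : ∀ {k : Fin d → ℤ}, k ∈ T → k ∈ K := fun {k} hk => hfin.mem_toFinset.1 hk
  have hAmeas : ∀ k : Fin d → ℤ, MeasurableSet (frontier E ∩ Metric.ball (z k) r) :=
    fun k => isClosed_frontier.measurableSet.inter Metric.isOpen_ball.measurableSet
  have step1 : ∀ k ∈ T, ENNReal.ofReal (κ * r ^ ((d:ℝ)-1)) ≤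
      μH[(d:ℝ)-1] (frontier E ∩ Metric.ball (z k) r) :=
    fun k hk => hAhl (z k) ((hz k (hTK hk)).1) r hr0 hrη
  have step2 : (T.card : ℝ≥0∞) * ENNReal.ofReal (κ * r ^ ((d:ℝ)-1)) ≤
      ∑ k ∈ T, μH[(d:ℝ)-1] (frontier E ∩ Metric.ball (z k) r) := by
    simpa [nsmul_eq_mul] using Finset.card_nsmul_le_sum T _ _ step1
  have hmult : ∀ w : EuclideanSpace ℝ (Fin d),
      (∑ k ∈ T, (frontier E ∩ Metric.ball (z k) r).indicator (1 : EuclideanSpace ℝ (Fin d) → ℝ≥0∞) w)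
        ≤ ENNReal.ofReal ((7*s)^d) := by
    intro w
    have heq : (∑ k ∈ T, (frontier E ∩ Metric.ball (z k) r).indicator (1 : EuclideanSpace ℝ (Fin d) → ℝ≥0∞) w)
        = ((T.filter (fun k => w ∈ frontier E ∩ Metric.ball (z k) r)).card : ℝ≥0∞) := by
      rw [← Finset.sum_boole]
      exact Finset.sum_congr rfl fun k _ => by simp [Set.indicator_apply]
    rw [heq]
    have hsub2 : ↑(T.filter (fun k => w ∈ frontier E ∩ Metric.ball (z k) r)) ⊆
        {k : Fin d → ℤ | ∀ i, |(k i : ℝ) - lenD (W i) (j i) * w i| < s + 2} := by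
      intro k hk
      simp only [Finset.coe_filter, Set.mem_setOf_eq] at hk
      obtain ⟨hkT, hwF, hwB⟩ := hk
      obtain ⟨hzF, hzb⟩ := hz k (hTK hkT)
      intro i
      have h1 : |z k i - w i| ≤ r := by
        have := abs_coord_le_dist (z k) w i
        have h2 : dist (z k) w < r := by rwa [Metric.mem_ball, dist_comm] at hwB
        linarith
      have h4 : lenD (W i) (j i) * |z k i - w i| ≤ 1 := by
        calc lenD (W i) (j i) * |z k i - w i| ≤ M * r :=
              mul_le_mul ((haW i).trans ((hWle i).trans hWmM)) h1 (abs_nonneg _) hM0.le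
          _ = 1 := mul_inv_cancel₀ hM0.ne'
      calc |(k i : ℝ) - lenD (W i) (j i) * w i|
          ≤ |(k i : ℝ) - lenD (W i) (j i) * z k i|
            + |lenD (W i) (j i) * z k i - lenD (W i) (j i) * w i| := abs_sub_le _ _ _
        _ = |(k i : ℝ) - lenD (W i) (j i) * z k i| + lenD (W i) (j i) * |z k i - w i| := by
            rw [← mul_sub, abs_mul, abs_of_nonneg (ha0 i)]
        _ < s + 2 := by linarith [hzb i]
    have hcard : ((T.filter (fun k => w ∈ frontier E ∩ Metric.ball (z k) r)).card : ℝ)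
        ≤ (7*s)^d := by
      rw [← Set.ncard_coe_finset]
      have hb0 : (↑(T.filter (fun k => w ∈ frontier E ∩ Metric.ball (z k) r)) :
          Set (Fin d → ℤ)).ncard ≤
          ({k : Fin d → ℤ | ∀ i, |(k i : ℝ) - lenD (W i) (j i) * w i| < s + 2}).ncard :=
        Set.ncard_le_ncard hsub2 (box_finite _ _)
      have hb1 : (({k : Fin d → ℤ | ∀ i, |(k i : ℝ) - lenD (W i) (j i) * w i| < s + 2}).ncard : ℝ)
          ≤ (2*(s+2)+1)^d := box_ncard _ (by linarith)
      have hb2 : ((2:ℝ)*(s+2)+1)^d ≤ (7*s)^d := pow_le_pow_left₀ (by linarith) (by linarith) d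
      calc ((↑(T.filter (fun k => w ∈ frontier E ∩ Metric.ball (z k) r)) :
              Set (Fin d → ℤ)).ncard : ℝ)
          ≤ (({k : Fin d → ℤ | ∀ i, |(k i : ℝ) - lenD (W i) (j i) * w i| < s + 2}).ncard : ℝ) :=
            Nat.cast_le.2 hb0
        _ ≤ (2*(s+2)+1)^d := hb1
        _ ≤ (7*s)^d := hb2
    calc ((T.filter (fun k => w ∈ frontier E ∩ Metric.ball (z k) r)).card : ℝ≥0∞)
        = ENNReal.ofReal ((T.filter (fun k => w ∈ frontier E ∩ Metric.ball (z k) r)).card : ℝ) :=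
          (ENNReal.ofReal_natCast _).symm
      _ ≤ ENNReal.ofReal ((7*s)^d) := ENNReal.ofReal_le_ofReal hcard
  have step3 : ∑ k ∈ T, μH[(d:ℝ)-1] (frontier E ∩ Metric.ball (z k) r)
      ≤ ENNReal.ofReal ((7*s)^d) * μH[(d:ℝ)-1] (frontier E) := by
    have hres : ∀ k ∈ T, μH[(d:ℝ)-1] (frontier E ∩ Metric.ball (z k) r)
        = (μH[(d:ℝ)-1].restrict (frontier E)) (frontier E ∩ Metric.ball (z k) r) := by
      intro k _
      rw [MeasureTheory.Measure.restrict_apply (hAmeas k)]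
      congr 1
      exact (Set.inter_eq_left.2 Set.inter_subset_left).symm
    calc ∑ k ∈ T, μH[(d:ℝ)-1] (frontier E ∩ Metric.ball (z k) r)
        = ∑ k ∈ T, (μH[(d:ℝ)-1].restrict (frontier E)) (frontier E ∩ Metric.ball (z k) r) :=
          Finset.sum_congr rfl hres
      _ = ∑ k ∈ T, ∫⁻ w, (frontier E ∩ Metric.ball (z k) r).indicator (1 : EuclideanSpace ℝ (Fin d) → ℝ≥0∞) w
            ∂(μH[(d:ℝ)-1].restrict (frontier E)) :=
          Finset.sum_congr rfl fun k _ => (MeasureTheory.lintegral_indicator_one (hAmeas k)).symm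
      _ = ∫⁻ w, ∑ k ∈ T, (frontier E ∩ Metric.ball (z k) r).indicator (1 : EuclideanSpace ℝ (Fin d) → ℝ≥0∞) w
            ∂(μH[(d:ℝ)-1].restrict (frontier E)) :=
          (MeasureTheory.lintegral_finset_sum T fun k _ =>
            measurable_const.indicator (hAmeas k)).symm
      _ ≤ ∫⁻ _, ENNReal.ofReal ((7*s)^d) ∂(μH[(d:ℝ)-1].restrict (frontier E)) :=
          MeasureTheory.lintegral_mono hmult
      _ = ENNReal.ofReal ((7*s)^d) * μH[(d:ℝ)-1] (frontier E) := by
          rw [MeasureTheory.lintegral_const, MeasureTheory.Measure.restrict_apply_univ]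
  have hcomb := step2.trans step3
  have hrM : r ^ ((d:ℝ)-1) * M ^ ((d:ℝ)-1) = 1 := by
    rw [← Real.mul_rpow hr0.le hM0.le, inv_mul_cancel₀ hM0.ne', Real.one_rpow]
  have hκr : 0 ≤ κ * r ^ ((d:ℝ)-1) := mul_nonneg hκ.le (Real.rpow_nonneg hr0.le _)
  have hncard : K.ncard = T.card := Set.ncard_eq_toFinset_card K hfin
  calc ENNReal.ofReal (κ * (K.ncard : ℝ))
      = (T.card : ℝ≥0∞) * ENNReal.ofReal κ := by
        rw [hncard, mul_comm κ, ENNReal.ofReal_mul (Nat.cast_nonneg _), ENNReal.ofReal_natCast]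
    _ = (T.card : ℝ≥0∞) * ENNReal.ofReal (κ * r ^ ((d:ℝ)-1)) * ENNReal.ofReal (M ^ ((d:ℝ)-1)) := by
        rw [mul_assoc, ← ENNReal.ofReal_mul hκr]
        congr 2
        rw [mul_assoc, hrM, mul_one]
    _ ≤ ENNReal.ofReal ((7*s)^d) * μH[(d:ℝ)-1] (frontier E) * ENNReal.ofReal (M ^ ((d:ℝ)-1)) :=
        mul_le_mul_left hcomb _
    _ = ENNReal.ofReal (7^d * M ^ ((d:ℝ)-1) * s ^ d) * μH[(d:ℝ)-1] (frontier E) := by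
        rw [mul_right_comm, ← ENNReal.ofReal_mul
          (pow_nonneg (by linarith : (0:ℝ) ≤ 7*s) d)]
        congr 2
        rw [mul_pow]
        ring
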